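/- Let g ∈ L²(ℝ) and a,b > 0, and suppose g vanishes almost everywhere outside an interval I of length |I| ≤ 1/b. If {E_{mb}T_{na}g}_{m,n∈ℤ} is a frame sequence with lower frame bound A, then G(x) = ∑_{n∈ℤ}|g(x−na)|² ≥ bA for almost every x ∈ ℝ − N_G. -/

import Mathlib

noncomputable section
open MeasureTheory Complex Filter Set
open scoped ENNReal NNReal ComplexConjugate BoundedContinuousFunction

/-- The Weyl–Heisenberg system function `E_{mb} T_{na} g`,
`x ↦ e^{2πi m b x} g (x - n a)`. -/
def whFun (g : ℝ → ℂ) (a b : ℝ) (m n : ℤ) : ℝ → ℂ := fun x =>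
  Complex.exp (2 * Real.pi * Complex.I * ((m : ℂ) * (b : ℂ)) * (x : ℂ)) * g (x - (n : ℝ) * a)

/-- `G(x) = ∑ₙ |g(x - n a)|²`, as a sum in `[0, ∞]`. -/
def Gfun (g : ℝ → ℂ) (a : ℝ) (x : ℝ) : ℝ≥0∞ :=
  ∑' n : ℤ, (‖g (x - (n : ℝ) * a)‖₊ : ℝ≥0∞) ^ 2

/-- `v` is a frame for the set `V` with bounds `A, B`:
`A‖f‖² ≤ ∑ᵢ |⟨f, vᵢ⟩|² ≤ B‖f‖²` for all `f ∈ V`. -/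
def IsFrameWithFor {H : Type*} [NormedAddCommGroup H] [InnerProductSpace ℂ H]
    {ι : Type*} (v : ι → H) (A B : ℝ) (V : Set H) : Prop :=
  ∀ f ∈ V, A * ‖f‖ ^ 2 ≤ ∑' i, ‖(inner ℂ f (v i) : ℂ)‖ ^ 2 ∧
    ∑' i, ‖(inner ℂ f (v i) : ℂ)‖ ^ 2 ≤ B * ‖f‖ ^ 2

/-- `v` is a frame sequence with bounds `A, B`: it is a frame for the closure of
the linear span of its range. -/
def IsFrameSeqWith {H : Type*} [NormedAddCommGroup H] [InnerProductSpace ℂ H]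
    {ι : Type*} (v : ι → H) (A B : ℝ) : Prop :=
  IsFrameWithFor v A B (closure ((Submodule.span ℂ (Set.range v) : Submodule ℂ H) : Set H))

private lemma ae_comp_sub {P : ℝ → Prop} (h : ∀ᵐ y : ℝ, P y) (c : ℝ) :
    ∀ᵐ x : ℝ, P (x - c) := by
  rw [ae_iff] at h ⊢
  have h2 := (measurePreserving_sub_right volume c).measure_preimage
    (NullMeasurableSet.of_null h)
  exact h2.trans h

private lemma sq_eLpNorm_two {α : Type*} [MeasurableSpace α] (μ : Measure α) (f : α → ℂ) :
    eLpNorm f 2 μ ^ 2 = ∫⁻ x, (‖f x‖₊ : ℝ≥0∞) ^ 2 ∂μ := by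
  rw [eLpNorm_eq_lintegral_rpow_enorm_toReal (by norm_num) (by norm_num)]
  rw [← ENNReal.rpow_natCast _ 2, ← ENNReal.rpow_mul]
  norm_num
  rfl

private lemma exp_integral_zero (b c : ℝ) (hb : 0 < b) (K : ℤ) (hK : K ≠ 0) :
    ∫ x in Set.Ioc c (c + 1/b), Complex.exp (2 * Real.pi * Complex.I * K * b * x) = 0 := by
  have hle : c ≤ c + 1/b := by nlinarith [one_div_pos.mpr hb]
  rw [← intervalIntegral.integral_of_le hle]
  have hc : (2 * Real.pi * Complex.I * K * b : ℂ) ≠ 0 := by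
    simp [Real.pi_ne_zero, Complex.I_ne_zero, hK, hb.ne']
  have := integral_exp_mul_complex (a := c) (b := c + 1/b) hc
  rw [show ∀ x:ℝ, (2 * Real.pi * Complex.I * K * b : ℂ) * x = 2 * Real.pi * Complex.I * K * b * x from fun _ => rfl] at this
  simp only [this]
  rw [div_eq_zero_iff]
  left
  rw [sub_eq_zero]
  have : ((c : ℝ) + 1/b : ℝ) = (c + 1/b : ℝ) := rfl
  push_cast
  rw [mul_add, Complex.exp_add]
  have hb' : (b:ℂ) ≠ 0 := by exact_mod_cast hb.ne'
  have : (2 * Real.pi * Complex.I * K * b : ℂ) * (1/b) = K * (2 * Real.pi * Complex.I) := by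
    field_simp
  rw [this, Complex.exp_int_mul_two_pi_mul_I, mul_one]

private lemma exp_shape (m : ℤ) (b x : ℝ) :
    (2 * Real.pi * Complex.I * ((m:ℂ) * (b:ℂ)) * (x:ℂ)) = ((2 * Real.pi * (m * b * x) : ℝ) : ℂ) * Complex.I := by
  push_cast; ring

private lemma bessel_aux (b c : ℝ) (hb : 0 < b) (h : ℝ → ℂ)
    (hh : MemLp h 2 (volume : Measure ℝ))
    (h0 : ∀ x, x ∉ Set.Ioc c (c + 1/b) → h x = 0) :
    Summable (fun m : ℤ =>
      ‖∫ x : ℝ, Complex.exp (2 * Real.pi * Complex.I * ((m:ℂ) * (b:ℂ)) * (x:ℂ)) * h x‖ ^ 2) ∧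
    ∑' m : ℤ, ‖∫ x : ℝ, Complex.exp (2 * Real.pi * Complex.I * ((m:ℂ) * (b:ℂ)) * (x:ℂ)) * h x‖ ^ 2
      ≤ (1/b) * (∫⁻ x : ℝ, (‖h x‖₊ : ℝ≥0∞) ^ 2).toReal := by
  classical
  set J : Set ℝ := Set.Ioc c (c + 1/b) with hJdef
  have hJ : MeasurableSet J := measurableSet_Ioc
  have hJvol : volume J = ENNReal.ofReal (1/b) := by
    rw [hJdef, Real.volume_Ioc]; congr 1; ring
  have hJfin : volume J ≠ ⊤ := by rw [hJvol]; exact ENNReal.ofReal_ne_top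
  set em : ℤ → ℝ → ℂ := fun m => J.indicator
    (fun x => (Real.sqrt b : ℂ) * Complex.exp (-(2 * Real.pi * Complex.I * ((m:ℂ) * (b:ℂ)) * (x:ℂ)))) with hemdef
  have hnorm_exp : ∀ (t : ℝ) (m : ℤ),
      ‖Complex.exp (-(2 * Real.pi * Complex.I * ((m:ℂ) * (b:ℂ)) * (t:ℂ)))‖ = 1 := by
    intro t m
    rw [Complex.norm_exp]
    norm_num
  have hmeas_em : ∀ m : ℤ, Measurable (em m) := by
    intro m
    apply Measurable.indicator _ hJ
    exact (Complex.measurable_exp.comp (by fun_prop)).const_mul _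
  have hem : ∀ m : ℤ, MemLp (em m) 2 (volume : Measure ℝ) := by
    intro m
    refine MemLp.of_le (memLp_indicator_const 2 hJ (Real.sqrt b : ℂ) (Or.inr hJfin))
      (hmeas_em m).aestronglyMeasurable (Eventually.of_forall fun x => ?_)
    rw [hemdef]
    by_cases hx : x ∈ J
    · simp only [Set.indicator_of_mem hx, norm_mul, hnorm_exp x m, mul_one]
      exact le_refl _
    · simp [Set.indicator_of_notMem hx]
  set E : ℤ → Lp ℂ 2 (volume : Measure ℝ) := fun m => (hem m).toLp (em m) with hEdef
  -- pointwise product formula for conj (em m x) * em k x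
  have hprod : ∀ (m k : ℤ) (x : ℝ), (starRingEnd ℂ) (em m x) * em k x
      = J.indicator (fun x => (b : ℂ) * Complex.exp (2 * Real.pi * Complex.I * (((m:ℂ) - k) * (b:ℂ)) * (x:ℂ))) x := by
    intro m k x
    by_cases hx : x ∈ J
    · simp only [hemdef, Set.indicator_of_mem hx, map_mul, ← Complex.exp_conj]
      have h1 : (starRingEnd ℂ) ((Real.sqrt b : ℝ) : ℂ) = (Real.sqrt b : ℂ) := Complex.conj_ofReal _
      have h2 : (starRingEnd ℂ) (-(2 * Real.pi * Complex.I * ((m:ℂ) * (b:ℂ)) * (x:ℂ)))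
          = 2 * Real.pi * Complex.I * ((m:ℂ) * (b:ℂ)) * (x:ℂ) := by
        rw [exp_shape m b x, map_neg, map_mul, Complex.conj_ofReal, Complex.conj_I]
        ring
      rw [h1, h2]
      rw [mul_mul_mul_comm, ← Complex.ofReal_mul, Real.mul_self_sqrt hb.le, ← Complex.exp_add]
      have harg : 2 * Real.pi * Complex.I * ((m:ℂ) * (b:ℂ)) * (x:ℂ)
            + -(2 * Real.pi * Complex.I * ((k:ℂ) * (b:ℂ)) * (x:ℂ))
          = 2 * Real.pi * Complex.I * (((m:ℂ) - k) * (b:ℂ)) * (x:ℂ) := by ring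
      rw [harg]
    · simp [hemdef, Set.indicator_of_notMem hx]
  have horth : Orthonormal ℂ E := by
    rw [orthonormal_iff_ite]
    intro m k
    have hinner : (inner ℂ (E m) (E k) : ℂ) = ∫ x : ℝ, (starRingEnd ℂ) (em m x) * em k x := by
      rw [hEdef, MeasureTheory.L2.inner_def]
      refine integral_congr_ae ?_
      filter_upwards [MemLp.coeFn_toLp (hem m), MemLp.coeFn_toLp (hem k)] with x h1 h2
      rw [RCLike.inner_apply, h1, h2, mul_comm]
    rw [hinner]
    simp_rw [hprod m k]
    rw [integral_indicator hJ]
    by_cases hmk : m = k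
    · subst hmk
      rw [if_pos rfl]
      have hone : ∀ x : ℝ,
          (b:ℂ) * Complex.exp (2 * Real.pi * Complex.I * (((m:ℂ) - m) * (b:ℂ)) * (x:ℂ)) = (b:ℂ) := by
        intro x; simp
      simp_rw [hone]
      rw [setIntegral_const, measureReal_def, hJvol, ENNReal.toReal_ofReal (by positivity), Complex.real_smul]
      push_cast
      field_simp
      exact div_self (by exact_mod_cast hb.ne')
    · rw [if_neg hmk]
      rw [integral_const_mul]
      have hcast : ∀ x : ℝ, 2 * Real.pi * Complex.I * (((m:ℂ) - k) * (b:ℂ)) * (x:ℂ)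
          = 2 * Real.pi * Complex.I * (((m - k : ℤ):ℂ)) * (b:ℂ) * (x:ℂ) := by
        intro x; push_cast; ring
      simp_rw [hcast]
      rw [hJdef, exp_integral_zero b c hb (m - k) (sub_ne_zero.mpr hmk), mul_zero]
  set H : Lp ℂ 2 (volume : Measure ℝ) := hh.toLp h with hHdef
  have hip : ∀ m : ℤ, (inner ℂ (E m) H : ℂ)
      = (Real.sqrt b : ℂ) * ∫ x : ℝ, Complex.exp (2 * Real.pi * Complex.I * ((m:ℂ) * (b:ℂ)) * (x:ℂ)) * h x := by
    intro m
    have h1 : (inner ℂ (E m) H : ℂ) = ∫ x : ℝ, (starRingEnd ℂ) (em m x) * h x := by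
      rw [hEdef, hHdef, MeasureTheory.L2.inner_def]
      refine integral_congr_ae ?_
      filter_upwards [MemLp.coeFn_toLp (hem m), MemLp.coeFn_toLp hh] with x hx1 hx2
      rw [RCLike.inner_apply, hx1, hx2, mul_comm]
    rw [h1]
    have h2 : ∀ x : ℝ, (starRingEnd ℂ) (em m x) * h x
        = (Real.sqrt b : ℂ) * (Complex.exp (2 * Real.pi * Complex.I * ((m:ℂ) * (b:ℂ)) * (x:ℂ)) * h x) := by
      intro x
      by_cases hx : x ∈ J
      · simp only [hemdef, Set.indicator_of_mem hx, map_mul, ← Complex.exp_conj]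
        rw [Complex.conj_ofReal]
        have h2' : (starRingEnd ℂ) (-(2 * Real.pi * Complex.I * ((m:ℂ) * (b:ℂ)) * (x:ℂ)))
            = 2 * Real.pi * Complex.I * ((m:ℂ) * (b:ℂ)) * (x:ℂ) := by
          rw [exp_shape m b x, map_neg, map_mul, Complex.conj_ofReal, Complex.conj_I]; ring
        rw [h2']; ring
      · simp [hemdef, Set.indicator_of_notMem hx, h0 x hx]
    simp_rw [h2]
    rw [integral_const_mul]
  have hb2 : ∀ m : ℤ, ‖(inner ℂ (E m) H : ℂ)‖ ^ 2
      = b * ‖∫ x : ℝ, Complex.exp (2 * Real.pi * Complex.I * ((m:ℂ) * (b:ℂ)) * (x:ℂ)) * h x‖ ^ 2 := by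
    intro m
    rw [hip m, norm_mul, mul_pow]
    congr 1
    rw [Complex.norm_real, Real.norm_eq_abs, _root_.abs_of_nonneg (Real.sqrt_nonneg b), Real.sq_sqrt hb.le]
  have hnormH : ‖H‖ ^ 2 = (∫⁻ x : ℝ, (‖h x‖₊ : ℝ≥0∞) ^ 2).toReal := by
    rw [hHdef, Lp.norm_toLp, ← ENNReal.toReal_pow, sq_eLpNorm_two]
  have hsum0 := horth.inner_products_summable (x := H)
  have hle0 := horth.tsum_inner_products_le H
  simp_rw [hb2] at hsum0 hle0
  constructor
  · exact (summable_mul_left_iff (ne_of_gt hb)).mp hsum0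
  · rw [← hnormH, one_div, inv_mul_eq_div, le_div_iff₀ hb, mul_comm]
    rw [tsum_mul_left] at hle0
    exact hle0


private lemma ennreal_sq_inj {X Y : ℝ≥0∞} (h : X ^ 2 = Y ^ 2) : X = Y := by
  have h2 := congrArg (fun z : ℝ≥0∞ => z ^ ((2:ℝ)⁻¹)) h
  simp only [← ENNReal.rpow_natCast, ← ENNReal.rpow_mul] at h2
  norm_num at h2
  exact h2

set_option maxHeartbeats 1000000 in
private lemma mem_closure_span (g : ℝ → ℂ) (hgm : Measurable g)
    (hg : MemLp g 2 (volume : Measure ℝ)) (a b : ℝ) (hb : 0 < b) (c : ℝ)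
    (hsupp : ∀ᵐ x : ℝ, x ∉ Set.Icc c (c + 1/b) → g x = 0)
    (F : ℤ × ℤ → Lp ℂ 2 (volume : Measure ℝ))
    (hF : ∀ p : ℤ × ℤ, (F p : ℝ → ℂ) =ᵐ[volume] whFun g a b p.1 p.2)
    (Δ : Set ℝ) (hΔm : MeasurableSet Δ) (hΔsub : Δ ⊆ Set.Ioc c (c + 1/b))
    (hfΔ : MemLp (Δ.indicator g) 2 (volume : Measure ℝ)) :
    (hfΔ.toLp _) ∈ closure ((Submodule.span ℂ (Set.range F) :
      Submodule ℂ (Lp ℂ 2 (volume : Measure ℝ))) : Set (Lp ℂ 2 (volume : Measure ℝ))) := by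
  classical
  haveI : Fact (0 < 1/b) := ⟨by positivity⟩
  set T : ℝ := 1/b with hTdef
  -- the weighted measure and its pushforward to the circle
  set ν : Measure ℝ := volume.withDensity (fun x => (‖g x‖₊ : ℝ≥0∞) ^ 2) with hνdef
  have hνfin : IsFiniteMeasure ν := by
    constructor
    rw [hνdef, withDensity_apply _ MeasurableSet.univ, setLIntegral_univ, ← sq_eLpNorm_two]
    exact ENNReal.pow_lt_top hg.2
  have hπ : Measurable (fun x : ℝ => (x : AddCircle T)) := AddCircle.measurable_mk'
  set ν' : Measure (AddCircle T) := ν.map (fun x : ℝ => (x : AddCircle T)) with hν'def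
  have hν'fin : IsFiniteMeasure ν' := by
    constructor
    rw [hν'def, Measure.map_apply hπ MeasurableSet.univ]
    exact hνfin.measure_univ_lt_top.trans_le (by simp)
  -- the indicator function on the circle
  set S : Set (AddCircle T) :=
    (AddCircle.measurableEquivIoc T c) ⁻¹' {y : Set.Ioc c (c + T) | (y : ℝ) ∈ Δ} with hSdef
  have hSm : MeasurableSet S := by
    apply MeasurableEquiv.measurable _ (measurable_subtype_coe hΔm)
  set χ : AddCircle T → ℂ := S.indicator (fun _ => (1:ℂ)) with hχdef
  have hχm : Measurable χ := measurable_const.indicator hSm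
  have hkey : ∀ x ∈ Set.Ioc c (c + T), χ (x : AddCircle T) = Δ.indicator (fun _ => (1:ℂ)) x := by
    intro x hx
    have hEq : (AddCircle.equivIoc T c) (x : AddCircle T) = ⟨x, hx⟩ := by
      rw [Equiv.apply_eq_iff_eq_symm_apply]
      rfl
    have hmem : ((x : AddCircle T) ∈ S) ↔ x ∈ Δ := by
      rw [hSdef]
      simp only [Set.mem_preimage, Set.mem_setOf_eq]
      show ((AddCircle.measurableEquivIoc T c) (x : AddCircle T) : ℝ) ∈ Δ ↔ x ∈ Δ
      have : (AddCircle.measurableEquivIoc T c) (x : AddCircle T) = ⟨x, hx⟩ := hEq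
      rw [this]
    by_cases hxΔ : x ∈ Δ
    · rw [hχdef, Set.indicator_of_mem (hmem.mpr hxΔ), Set.indicator_of_mem hxΔ]
    · rw [hχdef, Set.indicator_of_notMem (fun h => hxΔ (hmem.mp h)),
        Set.indicator_of_notMem hxΔ]
  -- a.e. identification of the indicator with χ ∘ π * g
  have hfΦχ : Δ.indicator g =ᵐ[volume] (fun x : ℝ => χ (x : AddCircle T) * g x) := by
    have hc : ∀ᵐ x : ℝ, x ≠ c := by
      refine measure_eq_zero_iff_ae_notMem.mp ?_
      exact Real.volume_singleton
    filter_upwards [hsupp, hc] with x hx hxc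
    by_cases hxJ : x ∈ Set.Ioc c (c + T)
    · rw [hkey x hxJ]
      by_cases hxΔ : x ∈ Δ
      · rw [Set.indicator_of_mem hxΔ, Set.indicator_of_mem hxΔ, one_mul]
      · rw [Set.indicator_of_notMem hxΔ, Set.indicator_of_notMem hxΔ, zero_mul]
    · have hxΔ : x ∉ Δ := fun h => hxJ (hΔsub h)
      have hgx : g x = 0 := by
        apply hx
        intro hmem
        rcases hmem with ⟨h1, h2⟩
        rcases lt_or_eq_of_le h1 with h1' | h1'
        · exact hxJ ⟨h1', h2⟩
        · exact hxc h1'.symm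
      rw [Set.indicator_of_notMem hxΔ, hgx, mul_zero]
  -- transfer of L² norms
  have hLp : ∀ u : AddCircle T → ℂ, Measurable u →
      eLpNorm (fun x : ℝ => u (x : AddCircle T) * g x) 2 volume = eLpNorm u 2 ν' := by
    intro u hu
    apply ennreal_sq_inj
    rw [sq_eLpNorm_two, sq_eLpNorm_two]
    have hmu : Measurable fun y : AddCircle T => (‖u y‖₊ : ℝ≥0∞) ^ 2 :=
      (hu.nnnorm.coe_nnreal_ennreal).pow_const 2
    rw [hν'def, lintegral_map hmu hπ,
      lintegral_withDensity_eq_lintegral_mul volume ((hgm.nnnorm.coe_nnreal_ennreal).pow_const 2)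
        (show Measurable fun x : ℝ => (‖u (x : AddCircle T)‖₊ : ℝ≥0∞) ^ 2 from hmu.comp hπ)]
    refine lintegral_congr fun x => ?_
    simp only [Pi.mul_apply, nnnorm_mul, ENNReal.coe_mul, mul_pow]
    ring
  -- membership of products q·g in L²
  have hcont_pi : Continuous (fun x : ℝ => (x : AddCircle T)) := continuous_quotient_mk'
  have memPhi : ∀ q : C(AddCircle T, ℂ),
      MemLp (fun x : ℝ => q (x : AddCircle T) * g x) 2 (volume : Measure ℝ) := by
    intro q
    refine MemLp.of_le (hg.const_mul ((‖q‖ : ℝ) : ℂ))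
      (((q.continuous.comp hcont_pi).aestronglyMeasurable).mul hgm.aestronglyMeasurable)
      (Eventually.of_forall fun x => ?_)
    rw [norm_mul, norm_mul, Complex.norm_real, Real.norm_eq_abs,
      _root_.abs_of_nonneg (norm_nonneg q)]
    exact mul_le_mul_of_nonneg_right (q.norm_coe_le_norm _) (norm_nonneg _)
  -- the span mapping
  have hspan : ∀ q : C(AddCircle T, ℂ), q ∈ Submodule.span ℂ (Set.range (fourier (T := T))) →
      (memPhi q).toLp _ ∈ Submodule.span ℂ (Set.range F) := by
    intro q hq
    induction hq using Submodule.span_induction with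
    | mem q hqmem =>
      obtain ⟨m, rfl⟩ := hqmem
      have hwh : (fun x : ℝ => fourier m (x : AddCircle T) * g x) = whFun g a b m 0 := by
        funext x
        rw [whFun]
        have hfc : fourier m (x : AddCircle T)
            = Complex.exp (2 * Real.pi * Complex.I * ((m:ℂ) * (b:ℂ)) * (x:ℂ)) := by
          rw [fourier_coe_apply]
          congr 1
          rw [hTdef]
          have hbne : (b:ℂ) ≠ 0 := by exact_mod_cast hb.ne'
          push_cast
          field_simp
        rw [hfc]
        norm_num
      have htoLp : (memPhi (fourier m)).toLp _ = F (m, 0) := by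
        rw [MemLp.toLp_congr (memPhi (fourier m)) (Lp.memLp (F (m,0)))
          (by rw [hwh]; exact (hF (m,0)).symm)]
        exact Lp.toLp_coeFn _ _
      rw [htoLp]
      exact Submodule.subset_span ⟨(m,0), rfl⟩
    | zero =>
      have hz : (fun x : ℝ => (0 : C(AddCircle T, ℂ)) (x : AddCircle T) * g x)
          =ᵐ[volume] (0 : ℝ → ℂ) := by
        refine Eventually.of_forall fun x => ?_
        simp
      rw [MemLp.toLp_congr _ (MemLp.zero : MemLp (0 : ℝ → ℂ) 2 volume) hz, MemLp.toLp_zero]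
      exact Submodule.zero_mem _
    | add q1 q2 hq1 hq2 ih1 ih2 =>
      have hadd : (fun x : ℝ => (q1 + q2) (x : AddCircle T) * g x)
          =ᵐ[volume] ((fun x : ℝ => q1 (x : AddCircle T) * g x)
            + fun x : ℝ => q2 (x : AddCircle T) * g x) := by
        refine Eventually.of_forall fun x => ?_
        simp [add_mul]
      rw [MemLp.toLp_congr _ ((memPhi q1).add (memPhi q2)) hadd, MemLp.toLp_add (memPhi q1) (memPhi q2)]
      exact Submodule.add_mem _ ih1 ih2
    | smul r q hq ih =>
      have hsmul : (fun x : ℝ => (r • q) (x : AddCircle T) * g x)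
          =ᵐ[volume] (r • fun x : ℝ => q (x : AddCircle T) * g x) := by
        refine Eventually.of_forall fun x => ?_
        simp [smul_mul_assoc, mul_assoc]
      rw [MemLp.toLp_congr _ ((memPhi q).const_smul r) hsmul, MemLp.toLp_const_smul r (memPhi q)]
      exact Submodule.smul_mem _ _ ih
  -- the approximation argument
  rw [Metric.mem_closure_iff]
  intro ε hε
  have hχmem : MemLp χ 2 ν' := by
    refine MemLp.of_le (memLp_const (1:ℂ)) hχm.aestronglyMeasurable
      (Eventually.of_forall fun y => ?_)
    rw [hχdef]
    by_cases hy : y ∈ S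
    · simp [Set.indicator_of_mem hy]
    · simp [Set.indicator_of_notMem hy]
  obtain ⟨ψ, hψ1, hψ2⟩ := hχmem.exists_boundedContinuous_eLpNorm_sub_le (by norm_num)
    (ε := ENNReal.ofReal (ε/4)) (ne_of_gt (ENNReal.ofReal_pos.mpr (by linarith)))
  set X : ℝ≥0∞ := (ν' Set.univ) ^ ((2:ℝ≥0∞).toReal)⁻¹ with hXdef
  have hXfin : X ≠ ⊤ := by
    rw [hXdef]
    exact ENNReal.rpow_ne_top_of_nonneg (by norm_num) (measure_ne_top ν' _)
  set C : ℝ := (ε/4) / (X.toReal + 1) with hCdef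
  have hXnn : 0 ≤ X.toReal := ENNReal.toReal_nonneg
  have hC : 0 < C := by
    rw [hCdef]
    apply div_pos (by linarith) (by linarith)
  have hψc : (ψ.toContinuousMap : C(AddCircle T, ℂ)) ∈ closure
      ((Submodule.span ℂ (Set.range (fourier (T := T))) : Submodule ℂ C(AddCircle T, ℂ)) : Set _) := by
    rw [← Submodule.topologicalClosure_coe, span_fourier_closure_eq_top]
    exact Set.mem_univ _
  obtain ⟨q, hq_mem, hq_dist⟩ := Metric.mem_closure_iff.mp hψc C hC
  have hq_meas : Measurable ⇑q := q.continuous.measurable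
  have hbd : eLpNorm (⇑ψ - ⇑q) 2 ν' ≤ ENNReal.ofReal (ε/4) := by
    have h1 : ∀ᵐ y ∂ν', ‖(⇑ψ - ⇑q) y‖ ≤ C := by
      refine Eventually.of_forall fun y => ?_
      rw [Pi.sub_apply, ← dist_eq_norm]
      calc dist (ψ y) (q y) = dist ((ψ.toContinuousMap : C(AddCircle T, ℂ)) y) (q y) := rfl
        _ ≤ dist (ψ.toContinuousMap : C(AddCircle T, ℂ)) q := ContinuousMap.dist_apply_le_dist y
        _ ≤ C := hq_dist.le
    calc eLpNorm (⇑ψ - ⇑q) 2 ν' ≤ ν' Set.univ ^ (2:ℝ≥0∞).toReal⁻¹ * ENNReal.ofReal C :=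
          eLpNorm_le_of_ae_bound h1
      _ = X * ENNReal.ofReal C := by rw [hXdef]
      _ ≤ ENNReal.ofReal (X.toReal + 1) * ENNReal.ofReal C := by
          gcongr
          exact le_trans (le_of_eq (ENNReal.ofReal_toReal hXfin).symm)
            (ENNReal.ofReal_le_ofReal (by linarith))
      _ = ENNReal.ofReal ((X.toReal + 1) * C) := (ENNReal.ofReal_mul (by linarith)).symm
      _ ≤ ENNReal.ofReal (ε/4) := by
          apply ENNReal.ofReal_le_ofReal
          rw [hCdef, mul_div_cancel₀ _ (by linarith : X.toReal + 1 ≠ 0)]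
  have htot : eLpNorm (χ - ⇑q) 2 ν' ≤ ENNReal.ofReal (ε/4) + ENNReal.ofReal (ε/4) := by
    calc eLpNorm (χ - ⇑q) 2 ν' = eLpNorm ((χ - ⇑ψ) + (⇑ψ - ⇑q)) 2 ν' := by
          rw [sub_add_sub_cancel]
      _ ≤ eLpNorm (χ - ⇑ψ) 2 ν' + eLpNorm (⇑ψ - ⇑q) 2 ν' :=
          eLpNorm_add_le (hχm.aestronglyMeasurable.sub
            (ψ.continuous.measurable.aestronglyMeasurable))
            ((ψ.continuous.measurable.sub hq_meas).aestronglyMeasurable) (by norm_num)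
      _ ≤ ENNReal.ofReal (ε/4) + ENNReal.ofReal (ε/4) := add_le_add hψ1 hbd
  refine ⟨(memPhi q).toLp _, hspan q hq_mem, ?_⟩
  rw [dist_eq_norm, ← MemLp.toLp_sub, Lp.norm_toLp]
  have hdiff : (Δ.indicator g - fun x : ℝ => q (x : AddCircle T) * g x)
      =ᵐ[volume] (fun x : ℝ => (χ - ⇑q) (x : AddCircle T) * g x) := by
    filter_upwards [hfΦχ] with x hx
    rw [Pi.sub_apply, hx, Pi.sub_apply, sub_mul]
  have heq2 : eLpNorm (Δ.indicator g - fun x : ℝ => q (x : AddCircle T) * g x) 2 volume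
      = eLpNorm (χ - ⇑q) 2 ν' :=
    (eLpNorm_congr_ae hdiff).trans (hLp _ (hχm.sub hq_meas))
  rw [heq2]
  have hfin : (ENNReal.ofReal (ε/4) + ENNReal.ofReal (ε/4)) ≠ ⊤ := by
    exact ENNReal.add_ne_top.mpr ⟨ENNReal.ofReal_ne_top, ENNReal.ofReal_ne_top⟩
  calc (eLpNorm (χ - ⇑q) 2 ν').toReal
      ≤ (ENNReal.ofReal (ε/4) + ENNReal.ofReal (ε/4)).toReal := ENNReal.toReal_mono hfin htot
    _ = ε/4 + ε/4 := by
        rw [ENNReal.toReal_add ENNReal.ofReal_ne_top ENNReal.ofReal_ne_top,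
          ENNReal.toReal_ofReal (by linarith)]
    _ < ε := by linarith



set_option maxHeartbeats 2000000 in
/-- **Corollary 2.2 (necessity of the lower bound)**. If `g` vanishes a.e. outside an
interval of length `≤ 1/b` and `{E_{mb} T_{na} g}` is a frame sequence with lower
frame bound `A`, then `G(x) ≥ bA` for a.e. `x ∈ ℝ - N_G`. -/
theorem wh_compact_support_lower_necessary
    (g : ℝ → ℂ) (hg : MemLp g 2 (volume : Measure ℝ)) (a b A : ℝ)
    (ha : 0 < a) (hb : 0 < b) (hA : 0 < A)
    (hsupp : ∃ c d : ℝ, d - c ≤ 1 / b ∧ ∀ᵐ x : ℝ, x ∉ Set.Icc c d → g x = 0)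
    (F : ℤ × ℤ → Lp ℂ 2 (volume : Measure ℝ))
    (hF : ∀ p : ℤ × ℤ, (F p : ℝ → ℂ) =ᵐ[volume] whFun g a b p.1 p.2)
    (hframe : ∃ B : ℝ, 0 < B ∧ IsFrameSeqWith F A B) :
    ∀ᵐ x : ℝ, Gfun g a x ≠ 0 → ENNReal.ofReal (b * A) ≤ Gfun g a x := by
  classical
  obtain ⟨B, hB, hframe⟩ := hframe
  unfold IsFrameSeqWith IsFrameWithFor at hframe
  obtain ⟨c, d, hdc, hsupp0⟩ := hsupp
  obtain ⟨g', hg'sm, hgg'⟩ := hg.1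
  have hg'm : Measurable g' := hg'sm.measurable
  have hg' : MemLp g' 2 (volume : Measure ℝ) := hg.ae_eq hgg'
  have htrans : ∀ n : ℤ, (fun x : ℝ => g (x - (n:ℝ) * a)) =ᵐ[volume]
      (fun x : ℝ => g' (x - (n:ℝ) * a)) := fun n =>
    ae_comp_sub (P := fun y => g y = g' y) hgg' ((n:ℝ)*a)
  have hGae : ∀ᵐ x : ℝ, Gfun g a x = Gfun g' a x := by
    filter_upwards [ae_all_iff.mpr htrans] with x hx
    exact tsum_congr fun n => by rw [hx n]
  have hsupp' : ∀ᵐ x : ℝ, x ∉ Set.Icc c (c + 1/b) → g' x = 0 := by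
    filter_upwards [hsupp0, hgg'] with x h1 h2 h3
    rw [← h2]
    exact h1 fun hmem => h3 ⟨hmem.1, hmem.2.trans (by linarith)⟩
  have hF' : ∀ p : ℤ × ℤ, (F p : ℝ → ℂ) =ᵐ[volume] whFun g' a b p.1 p.2 := by
    intro p
    refine (hF p).trans ?_
    filter_upwards [htrans p.2] with x hx
    rw [whFun, whFun, hx]
  have hGm : Measurable (Gfun g' a) := by
    apply Measurable.ennreal_tsum
    intro n
    exact ((hg'm.comp (measurable_id.sub measurable_const)).nnnorm.coe_nnreal_ennreal).pow_const 2
  -- KEY STEP: the sub-level sets of `Gfun g'` inside the support cell are null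
  have key : ∀ ε : ℝ, 0 < ε → ε ≤ b * A →
      volume {x : ℝ | x ∈ Set.Ioc c (c + 1/b) ∧ g' x ≠ 0
        ∧ Gfun g' a x ≤ ENNReal.ofReal (b * A - ε)} = 0 := by
    intro ε hε hεA
    by_contra hpos
    set Δ : Set ℝ := {x : ℝ | x ∈ Set.Ioc c (c + 1/b) ∧ g' x ≠ 0
        ∧ Gfun g' a x ≤ ENNReal.ofReal (b * A - ε)} with hΔdef
    have hΔm : MeasurableSet Δ := by
      rw [hΔdef]
      simp only [Set.setOf_and]
      refine MeasurableSet.inter ?_ (MeasurableSet.inter ?_ ?_)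
      · exact measurableSet_Ioc
      · exact (hg'm (measurableSet_singleton 0)).compl
      · exact hGm measurableSet_Iic
    have hΔsub : Δ ⊆ Set.Ioc c (c + 1/b) := fun x hx => hx.1
    set fΔ : ℝ → ℂ := Δ.indicator g' with hfΔdef
    have hfΔsm : AEStronglyMeasurable fΔ (volume : Measure ℝ) :=
      (hg'm.indicator hΔm).aestronglyMeasurable
    have hfΔ : MemLp fΔ 2 (volume : Measure ℝ) := by
      refine MemLp.of_le hg' hfΔsm (Eventually.of_forall fun x => ?_)
      rw [hfΔdef]
      by_cases hx : x ∈ Δ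
      · rw [Set.indicator_of_mem hx]
      · rw [Set.indicator_of_notMem hx]; simp
    set f0 : Lp ℂ 2 (volume : Measure ℝ) := hfΔ.toLp fΔ with hf0def
    have hmemV := mem_closure_span g' hg'm hg' a b hb c hsupp' F hF' Δ hΔm hΔsub hfΔ
    have hlow := (hframe f0 hmemV).1
    -- pointwise bounds on Δ
    have hnormb : ∀ x ∈ Δ, ∀ n : ℤ, ‖g' (x - (n:ℝ)*a)‖ ≤ Real.sqrt (b*A) := by
      intro x hx n
      have h1 : (‖g' (x - (n:ℝ)*a)‖₊ : ℝ≥0∞)^2 ≤ ENNReal.ofReal (b*A - ε) :=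
        le_trans (ENNReal.le_tsum n) hx.2.2
      have h2 : ((‖g' (x - (n:ℝ)*a)‖₊ : ℝ≥0∞)^2).toReal ≤ b*A - ε := by
        refine le_trans (ENNReal.toReal_mono ENNReal.ofReal_ne_top h1) ?_
        exact le_of_eq (ENNReal.toReal_ofReal (by linarith))
      have h3 : ‖g' (x - (n:ℝ)*a)‖^2 ≤ b*A := by
        have he : ((‖g' (x - (n:ℝ)*a)‖₊ : ℝ≥0∞)^2).toReal = ‖g' (x - (n:ℝ)*a)‖^2 := by
          rw [ENNReal.toReal_pow, ENNReal.coe_toReal, coe_nnnorm]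
        rw [he] at h2
        linarith
      calc ‖g' (x - (n:ℝ)*a)‖ = Real.sqrt (‖g' (x - (n:ℝ)*a)‖^2) :=
            (Real.sqrt_sq (norm_nonneg _)).symm
        _ ≤ Real.sqrt (b*A) := Real.sqrt_le_sqrt h3
    -- the fibre functions
    set hfun : ℤ → ℝ → ℂ := fun n x => (starRingEnd ℂ) (fΔ x) * g' (x - (n:ℝ)*a) with hhfundef
    have hfun_meas : ∀ n : ℤ, Measurable (hfun n) := fun n =>
      (continuous_star.measurable.comp (hg'm.indicator hΔm)).mul
        (hg'm.comp (measurable_id.sub measurable_const))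
    have hfun_supp : ∀ n : ℤ, ∀ x : ℝ, x ∉ Set.Ioc c (c + 1/b) → hfun n x = 0 := by
      intro n x hx
      have : fΔ x = 0 := Set.indicator_of_notMem (fun h => hx (hΔsub h)) g'
      rw [hhfundef]
      simp [this]
    have hfun_mem : ∀ n : ℤ, MemLp (hfun n) 2 (volume : Measure ℝ) := by
      intro n
      refine MemLp.of_le (hfΔ.const_mul ((Real.sqrt (b*A) : ℝ) : ℂ))
        (hfun_meas n).aestronglyMeasurable (Eventually.of_forall fun x => ?_)
      rw [hhfundef]
      simp only [norm_mul, RCLike.norm_conj, Complex.norm_real, Real.norm_eq_abs,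
        _root_.abs_of_nonneg (Real.sqrt_nonneg (b*A))]
      by_cases hx : x ∈ Δ
      · rw [mul_comm (Real.sqrt (b*A))]
        exact mul_le_mul_of_nonneg_left (hnormb x hx n) (norm_nonneg _)
      · rw [hfΔdef, Set.indicator_of_notMem hx]
        simp
    -- the lintegrals
    set Ln : ℤ → ℝ≥0∞ := fun n =>
      ∫⁻ x : ℝ, (‖fΔ x‖₊ : ℝ≥0∞)^2 * (‖g' (x - (n:ℝ)*a)‖₊ : ℝ≥0∞)^2 with hLndef
    have hLn_eq : ∀ n : ℤ, (∫⁻ x : ℝ, (‖hfun n x‖₊ : ℝ≥0∞)^2) = Ln n := by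
      intro n
      refine lintegral_congr fun x => ?_
      simp only [hhfundef, nnnorm_mul, RCLike.nnnorm_conj, ENNReal.coe_mul, mul_pow]
    set NfE : ℝ≥0∞ := ∫⁻ x : ℝ, (‖fΔ x‖₊ : ℝ≥0∞)^2 with hNfEdef
    have hNfE_fin : NfE ≠ ⊤ := by
      rw [hNfEdef, ← sq_eLpNorm_two]
      exact (ENNReal.pow_lt_top hfΔ.2).ne
    have hNfE_pos : NfE ≠ 0 := by
      intro h0
      rw [hNfEdef, lintegral_eq_zero_iff
        (((hg'm.indicator hΔm).nnnorm.coe_nnreal_ennreal).pow_const 2)] at h0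
      have : ∀ᵐ x : ℝ, x ∉ Δ := by
        filter_upwards [h0] with x hx hxΔ
        have : fΔ x = 0 := by
          have hx' : (‖fΔ x‖₊ : ℝ≥0∞)^2 = 0 := hx
          simpa using hx'
        rw [hfΔdef, Set.indicator_of_mem hxΔ] at this
        exact hxΔ.2.1 this
      exact hpos (measure_eq_zero_iff_ae_notMem.mpr this)
    have hTot : ∑' n : ℤ, Ln n = ∫⁻ x : ℝ, (‖fΔ x‖₊ : ℝ≥0∞)^2 * Gfun g' a x := by
      rw [hLndef, ← lintegral_tsum]
      · refine lintegral_congr fun x => ?_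
        rw [Gfun, ENNReal.tsum_mul_left]
      · intro n
        exact ((((hg'm.indicator hΔm).nnnorm.coe_nnreal_ennreal).pow_const 2).mul
          (((hg'm.comp (measurable_id.sub measurable_const)).nnnorm.coe_nnreal_ennreal).pow_const 2)).aemeasurable
    have hTot_le : ∑' n : ℤ, Ln n ≤ ENNReal.ofReal (b*A - ε) * NfE := by
      rw [hTot, hNfEdef, ← lintegral_const_mul _
        (((hg'm.indicator hΔm).nnnorm.coe_nnreal_ennreal).pow_const 2)]
      refine lintegral_mono fun x => ?_
      by_cases hx : x ∈ Δ
      · rw [mul_comm (ENNReal.ofReal (b*A - ε))]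
        exact mul_le_mul_right hx.2.2 _
      · rw [hfΔdef, Set.indicator_of_notMem hx]
        simp
    have hTot_fin : ∑' n : ℤ, Ln n ≠ ⊤ :=
      (lt_of_le_of_lt hTot_le (ENNReal.mul_lt_top ENNReal.ofReal_lt_top
        hNfE_fin.lt_top)).ne
    have hLn_fin : ∀ n : ℤ, Ln n ≠ ⊤ := fun n =>
      ne_top_of_le_ne_top hTot_fin (ENNReal.le_tsum n)
    have hJsum : Summable (fun n : ℤ => (Ln n).toReal) := ENNReal.summable_toReal hTot_fin
    have hJtsum : ∑' n : ℤ, (Ln n).toReal ≤ (b*A - ε) * NfE.toReal := by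
      rw [← ENNReal.tsum_toReal_eq hLn_fin]
      refine le_trans (ENNReal.toReal_mono
        (ENNReal.mul_ne_top ENNReal.ofReal_ne_top hNfE_fin) hTot_le) ?_
      rw [ENNReal.toReal_mul, ENNReal.toReal_ofReal (by linarith)]
    have hnormf0 : ‖f0‖^2 = NfE.toReal := by
      rw [hf0def, Lp.norm_toLp, ← ENNReal.toReal_pow, sq_eLpNorm_two, hNfEdef]
    have hNfR_pos : 0 < NfE.toReal := ENNReal.toReal_pos hNfE_pos hNfE_fin
    -- inner products
    have hip : ∀ p : ℤ × ℤ, (inner ℂ f0 (F p) : ℂ)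
        = ∫ x : ℝ, Complex.exp (2 * Real.pi * Complex.I * ((p.1:ℂ) * (b:ℂ)) * (x:ℂ))
            * hfun p.2 x := by
      intro p
      rw [hf0def, MeasureTheory.L2.inner_def]
      refine integral_congr_ae ?_
      filter_upwards [hfΔ.coeFn_toLp, hF' p] with x h1 h2
      rw [RCLike.inner_apply, h1, h2, whFun, hhfundef]
      ring
    set Tp : ℤ × ℤ → ℝ := fun p => ‖(inner ℂ f0 (F p) : ℂ)‖^2 with hTpdef
    have hbes : ∀ n : ℤ, Summable (fun m : ℤ => Tp (m, n))
        ∧ ∑' m : ℤ, Tp (m, n) ≤ (1/b) * (Ln n).toReal := by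
      intro n
      have hb0 := bessel_aux b c hb (hfun n) (hfun_mem n) (hfun_supp n)
      rw [hLn_eq n] at hb0
      have heq : ∀ m : ℤ, Tp (m, n)
          = ‖∫ x : ℝ, Complex.exp (2 * Real.pi * Complex.I * ((m:ℂ) * (b:ℂ)) * (x:ℂ))
              * hfun n x‖^2 := fun m => by simp only [hTpdef]; rw [hip (m, n)]
      constructor
      · exact hb0.1.congr fun m => (heq m).symm
      · rw [tsum_congr heq]
        exact hb0.2
    by_cases hsumT : Summable Tp
    · have hUsum : Summable (fun q : ℤ × ℤ => Tp (q.2, q.1)) := by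
        have h1 := ((Equiv.prodComm ℤ ℤ).summable_iff (f := Tp)).mpr hsumT
        exact h1
      have hswap : ∑' p : ℤ × ℤ, Tp p = ∑' n : ℤ, ∑' m : ℤ, Tp (m, n) := by
        rw [← Equiv.tsum_eq (Equiv.prodComm ℤ ℤ) Tp]
        exact Summable.tsum_prod' hUsum fun n => (hbes n).1
      have hS : Summable (fun n : ℤ => ∑' m : ℤ, Tp (m, n)) :=
        ((summable_prod_of_nonneg (f := fun q : ℤ × ℤ => Tp (q.2, q.1))
          (fun q => by rw [hTpdef]; positivity)).mp hUsum).2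
      have hle2 : ∑' n : ℤ, ∑' m : ℤ, Tp (m, n)
          ≤ ∑' n : ℤ, (1/b) * (Ln n).toReal :=
        Summable.tsum_le_tsum (fun n => (hbes n).2) hS (hJsum.mul_left _)
      rw [hswap] at hlow
      rw [tsum_mul_left] at hle2
      have hfinal : A * NfE.toReal ≤ (1/b) * ((b*A - ε) * NfE.toReal) := by
        calc A * NfE.toReal = A * ‖f0‖^2 := by rw [hnormf0]
          _ ≤ ∑' n : ℤ, ∑' m : ℤ, Tp (m, n) := hlow
          _ ≤ (1/b) * ∑' n : ℤ, (Ln n).toReal := hle2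
          _ ≤ (1/b) * ((b*A - ε) * NfE.toReal) := by
              exact mul_le_mul_of_nonneg_left hJtsum (by positivity)
      have hcontr : (1/b) * ((b*A - ε) * NfE.toReal)
          = A * NfE.toReal - (ε/b) * NfE.toReal := by
        field_simp
      rw [hcontr] at hfinal
      nlinarith [mul_pos (div_pos hε hb) hNfR_pos]
    · rw [tsum_eq_zero_of_not_summable hsumT, hnormf0] at hlow
      nlinarith
  -- ASSEMBLY
  set Bad : ℕ → Set ℝ := fun k => {x : ℝ | x ∈ Set.Ioc c (c + 1/b) ∧ g' x ≠ 0
    ∧ Gfun g' a x ≤ ENNReal.ofReal (b*A - b*A/((k:ℝ)+1))} with hBaddef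
  have hBad : ∀ k : ℕ, volume (Bad k) = 0 := by
    intro k
    refine key (b*A/((k:ℝ)+1)) (by positivity) ?_
    rw [div_le_iff₀ (by positivity : (0:ℝ) < (k:ℝ)+1)]
    nlinarith [Nat.cast_nonneg (α := ℝ) k, mul_pos hb hA]
  have hU0 : volume (⋃ k, Bad k) = 0 := measure_iUnion_null hBad
  have hcover : ∀ y : ℝ, y ∈ Set.Ioc c (c + 1/b) → g' y ≠ 0 →
      Gfun g' a y < ENNReal.ofReal (b*A) → y ∈ ⋃ k, Bad k := by
    intro y hy1 hy2 hy3
    have hfin : Gfun g' a y ≠ ⊤ := (hy3.trans_le le_top).ne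
    have hr : (Gfun g' a y).toReal < b*A := by
      rw [← ENNReal.lt_ofReal_iff_toReal_lt hfin]
      exact hy3
    set r : ℝ := (Gfun g' a y).toReal with hrdef
    have hbA : 0 < b*A := mul_pos hb hA
    have hrpos : 0 < b*A - r := by linarith
    obtain ⟨k, hk⟩ := exists_nat_gt (b*A/(b*A - r))
    refine Set.mem_iUnion.mpr ⟨k, hy1, hy2, ?_⟩
    rw [← ENNReal.ofReal_toReal hfin]
    apply ENNReal.ofReal_le_ofReal
    have hk1 : b*A/(b*A - r) < (k:ℝ)+1 := hk.trans (by linarith)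
    have h2 : b*A < ((k:ℝ)+1)*(b*A - r) := by
      rw [div_lt_iff₀ hrpos] at hk1
      linarith
    have h3 : b*A/((k:ℝ)+1) < b*A - r := by
      rw [div_lt_iff₀ (by positivity : (0:ℝ) < (k:ℝ)+1)]
      linarith
    linarith
  have hper : ∀ (x : ℝ) (n : ℤ), Gfun g' a (x - (n:ℝ)*a) = Gfun g' a x := by
    intro x n
    rw [Gfun, Gfun]
    calc ∑' j : ℤ, (‖g' (x - (n:ℝ)*a - (j:ℝ)*a)‖₊ : ℝ≥0∞)^2
        = ∑' j : ℤ, (‖g' (x - (((n + j : ℤ)):ℝ)*a)‖₊ : ℝ≥0∞)^2 := by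
          refine tsum_congr fun j => ?_
          have : x - (n:ℝ)*a - (j:ℝ)*a = x - (((n + j : ℤ)):ℝ)*a := by push_cast; ring
          rw [this]
      _ = ∑' i : ℤ, (‖g' (x - (i:ℝ)*a)‖₊ : ℝ≥0∞)^2 :=
          (Equiv.addLeft n).tsum_eq (fun i : ℤ => (‖g' (x - (i:ℝ)*a)‖₊ : ℝ≥0∞)^2)
  have hae_main : ∀ᵐ x : ℝ, ∀ n : ℤ, (x - (n:ℝ)*a) ∉ ⋃ k, Bad k := by
    rw [ae_all_iff]
    intro n
    exact ae_comp_sub (P := fun y => y ∉ ⋃ k, Bad k)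
      (measure_eq_zero_iff_ae_notMem.mp hU0) ((n:ℝ)*a)
  have hsupp_all : ∀ᵐ x : ℝ, ∀ n : ℤ,
      ((x - (n:ℝ)*a) ∉ Set.Icc c (c + 1/b) → g' (x - (n:ℝ)*a) = 0) := by
    rw [ae_all_iff]
    intro n
    exact ae_comp_sub (P := fun y => y ∉ Set.Icc c (c + 1/b) → g' y = 0) hsupp' ((n:ℝ)*a)
  have hc_all : ∀ᵐ x : ℝ, ∀ n : ℤ, x - (n:ℝ)*a ≠ c := by
    rw [ae_all_iff]
    intro n
    refine ae_comp_sub (P := fun y => y ≠ c) ?_ ((n:ℝ)*a)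
    exact measure_eq_zero_iff_ae_notMem.mp Real.volume_singleton
  filter_upwards [hGae, hae_main, hsupp_all, hc_all] with x hx1 hx2 hx3 hx4
  intro hGne
  rw [hx1] at hGne ⊢
  have hex : ∃ n : ℤ, g' (x - (n:ℝ)*a) ≠ 0 := by
    by_contra hall
    push_neg at hall
    exact hGne (by simp [Gfun, hall])
  obtain ⟨n₀, hn₀⟩ := hex
  have hyIcc : x - (n₀:ℝ)*a ∈ Set.Icc c (c + 1/b) := by
    by_contra hnot
    exact hn₀ (hx3 n₀ hnot)
  have hyIoc : x - (n₀:ℝ)*a ∈ Set.Ioc c (c + 1/b) :=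
    ⟨lt_of_le_of_ne hyIcc.1 (Ne.symm (hx4 n₀)), hyIcc.2⟩
  have hnot : ¬ (Gfun g' a (x - (n₀:ℝ)*a) < ENNReal.ofReal (b*A)) := fun hlt =>
    hx2 n₀ (hcover _ hyIoc hn₀ hlt)
  rw [← hper x n₀]
  exact not_lt.mp hnot
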